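/- Let $(P, \Theta, \omega)$ be a premulticontact manifold with characteristic distribution $\mathcal{C}$ of rank $k > 0$. Then, in an adapted chart with $\omega = \mathrm{d}^m x$, there exist local Reeb vector fields $\{R_\mu\}_{\mu=1}^m$ such that $\mathfrak{R} = \langle R_\mu \rangle + \Gamma(\mathcal{C})$ and $i(R_\mu)\Theta = \mathrm{d}^{m-1}x_\mu$; they are unique up to the addition of sections of $\mathcal{C}$, and $[R_\mu, R_\nu] \in \Gamma(\mathcal{C})$. -/

import Mathlib

open scoped BigOperators

noncomputable section

/-- Vector fields on `P` in a trivialized model with tangent model space `E`. -/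
abbrev VF (P E : Type) := P → E

/-- Differential `k`-forms on `P` in the trivialized model: a pointwise alternating `k`-form. -/
abbrev Form (P E : Type) [AddCommGroup E] [Module ℝ E] (k : ℕ) :=
  P → AlternatingMap ℝ E ℝ (Fin k)

variable {P E : Type} [AddCommGroup E] [Module ℝ E]

/-- Interior product (contraction) of a vector field with a `(k+1)`-form. -/
def iotaF {k : ℕ} (X : VF P E) (α : Form P E (k + 1)) : Form P E k :=
  fun p => (α p).curryLeft (X p)

/-- Multiplication of a form by a function. -/
def fsmul {k : ℕ} (g : P → ℝ) (β : Form P E k) : Form P E k := fun p => g p • β p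

/-- A function regarded as a `0`-form. -/
def toF0 (g : P → ℝ) : Form P E 0 := fun p => AlternatingMap.constOfIsEmpty ℝ E (Fin 0) (g p)

/-- The pointwise wedge product of alternating forms. -/
def altWedge {j k : ℕ} (f : AlternatingMap ℝ E ℝ (Fin j))
    (g : AlternatingMap ℝ E ℝ (Fin k)) : AlternatingMap ℝ E ℝ (Fin (j + k)) :=
  (LinearMap.mul' ℝ ℝ).compAlternatingMap ((f.domCoprod g).domDomCongr finSumFinEquiv)

/-- Pointwise wedge of a `1`-form with a `k`-form. -/
def w1p {k : ℕ} (σ : AlternatingMap ℝ E ℝ (Fin 1))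
    (β : AlternatingMap ℝ E ℝ (Fin k)) : AlternatingMap ℝ E ℝ (Fin (k + 1)) :=
  (altWedge σ β).domDomCongr (finCongr (Nat.add_comm 1 k))

/-- Pointwise wedge of a `2`-form with a `k`-form. -/
def w2p {k : ℕ} (γ : AlternatingMap ℝ E ℝ (Fin 2))
    (β : AlternatingMap ℝ E ℝ (Fin k)) : AlternatingMap ℝ E ℝ (Fin (k + 2)) :=
  (altWedge γ β).domDomCongr (finCongr (Nat.add_comm 2 k))

/-- Wedge of a `1`-form with a `k`-form, at the level of forms on `P`. -/
def w1F {k : ℕ} (σ : Form P E 1) (β : Form P E k) : Form P E (k + 1) :=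
  fun p => w1p (σ p) (β p)

/-- Wedge of a `2`-form with a `k`-form, at the level of forms on `P`. -/
def w2F {k : ℕ} (γ : Form P E 2) (β : Form P E k) : Form P E (k + 2) :=
  fun p => w2p (γ p) (β p)

/-- An abstract differential calculus on the trivialized model `P × E`:
an exterior derivative, a Lie bracket of vector fields and a Lie derivative,
satisfying the usual Cartan calculus identities. -/
structure DiffCalc (P E : Type) [AddCommGroup E] [Module ℝ E] where
  d : ∀ {k : ℕ}, Form P E k → Form P E (k + 1)
  bracket : VF P E → VF P E → VF P E
  lieD : VF P E → ∀ {k : ℕ}, Form P E k → Form P E k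
  d_add : ∀ {k : ℕ} (α β : Form P E k), d (α + β) = d α + d β
  d_smul : ∀ {k : ℕ} (c : ℝ) (α : Form P E k), d (c • α) = c • d α
  d_d : ∀ {k : ℕ} (α : Form P E k), d (d α) = 0
  cartan : ∀ (X : VF P E) {k : ℕ} (α : Form P E (k + 1)),
    lieD X α = iotaF X (d α) + d (iotaF X α)
  lie_iota : ∀ (X Y : VF P E) {k : ℕ} (α : Form P E (k + 1)),
    lieD X (iotaF Y α) = iotaF (bracket X Y) α + iotaF Y (lieD X α)
  lieD_add : ∀ (X : VF P E) {k : ℕ} (α β : Form P E k),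
    lieD X (α + β) = lieD X α + lieD X β
  leibniz_fun : ∀ (g : P → ℝ) {k : ℕ} (β : Form P E k),
    d (fsmul g β) = w1F (d (toF0 g)) β + fsmul g (d β)
  leibniz_one : ∀ (σ : Form P E 1) {k : ℕ} (β : Form P E k),
    d (w1F σ β) = w2F (d σ) β - w1F σ (d β)

/-- The kernel (at `p`) of a form of positive degree. -/
def kerSet {k : ℕ} (ω : Form P E (k + 1)) (p : P) : Set E :=
  {v | (ω p).curryLeft v = 0}

/-- The rank of a subset of the tangent model: the dimension of its span. -/
def rk (S : Set E) : ℕ := Module.finrank ℝ (Submodule.span ℝ S)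

/-- A `j`-form is semibasic (annihilated by `ker ω`) ; every `0`-form is semibasic. -/
def SemibasicPt {m : ℕ} (ω : Form P E (m + 1)) : ∀ {j : ℕ}, Form P E j → Prop
  | 0, _ => True
  | _ + 1, α => ∀ p, ∀ v ∈ kerSet ω p, (α p).curryLeft v = 0

/-- The Reeb "distribution" at a point `p`: tangent vectors in `ker ω` whose contraction with
`dΘ` is annihilated by `ker ω`. -/
def reebSet (C : DiffCalc P E) {m : ℕ} (Θ ω : Form P E (m + 1)) (p : P) : Set E :=
  {v | v ∈ kerSet ω p ∧ ∀ w ∈ kerSet ω p, (((C.d Θ) p).curryLeft v).curryLeft w = 0}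

/-- The characteristic distribution `ker ω ∩ ker Θ ∩ ker dΘ` at a point. -/
def charSet (C : DiffCalc P E) {m : ℕ} (Θ ω : Form P E (m + 1)) (p : P) : Set E :=
  {v | v ∈ kerSet ω p ∧ (Θ p).curryLeft v = 0 ∧ ((C.d Θ) p).curryLeft v = 0}

/-- A Reeb vector field: a section of the Reeb distribution. -/
def IsReebField (C : DiffCalc P E) {m : ℕ} (Θ ω : Form P E (m + 1)) (R : VF P E) : Prop :=
  ∀ p, R p ∈ reebSet C Θ ω p

/-- Definition of a premulticontact structure `(Θ, ω)` on `P` (degrees `m+1`, i.e. `dim M = m+1`):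
`ω` is closed, `ker ω` has constant rank `N`, the Reeb distribution has rank `(m+1)+k`, the
characteristic distribution has rank `k`, and the semibasic `m`-forms are exactly the
contractions `i(R)Θ` with Reeb vector fields `R`.  For `k = 0` this is a multicontact
structure. -/
structure IsPremulticontact (C : DiffCalc P E) (m N k : ℕ) (Θ ω : Form P E (m + 1)) :
    Prop where
  dim_eq : Module.finrank ℝ E = (m + 1) + N
  k_le : k ≤ N - (m + 1)
  closed : C.d ω = 0
  rank_ker : ∀ p, rk (kerSet ω p) = N
  rank_reeb : ∀ p, rk (reebSet C Θ ω p) = (m + 1) + k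
  rank_char : ∀ p, rk (charSet C Θ ω p) = k
  reeb_semibasic :
    {α : Form P E m | SemibasicPt ω α} =
      {α : Form P E m | ∃ R : VF P E, IsReebField C Θ ω R ∧ α = iotaF R Θ}

section AuxBasic

variable {P E : Type} [AddCommGroup E] [Module ℝ E]

lemma pmc_iotaF_apply {k : ℕ} (X : VF P E) (α : Form P E (k + 1)) (p : P) :
    iotaF X α p = (α p).curryLeft (X p) := rfl

lemma pmc_iotaF_add {k : ℕ} (X : VF P E) (α β : Form P E (k + 1)) :
    iotaF X (α + β) = iotaF X α + iotaF X β := by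
  funext p
  show ((α + β) p).curryLeft (X p) = (α p).curryLeft (X p) + (β p).curryLeft (X p)
  rw [Pi.add_apply, AlternatingMap.curryLeft_add, LinearMap.add_apply]

lemma pmc_iotaF_zero {k : ℕ} (X : VF P E) :
    iotaF X (0 : Form P E (k + 1)) = 0 := by
  funext p
  show ((0 : Form P E (k+1)) p).curryLeft (X p) = 0
  rw [Pi.zero_apply, AlternatingMap.curryLeft_zero, LinearMap.zero_apply]

lemma pmc_d_zero (C : DiffCalc P E) {k : ℕ} : C.d (0 : Form P E k) = 0 := by
  have h := C.d_smul 0 (0 : Form P E k)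
  simpa using h

lemma pmc_lieD_zero (C : DiffCalc P E) (X : VF P E) {k : ℕ} :
    C.lieD X (0 : Form P E k) = 0 := by
  have h := C.lieD_add X (0 : Form P E k) 0
  rw [add_zero] at h
  exact left_eq_add.mp h

lemma pmc_fsmul_zero {k : ℕ} (g : P → ℝ) : fsmul g (0 : Form P E k) = 0 := by
  funext p; simp [fsmul]

/-- Contraction of a vector field lying in `ker ω` with a form annihilated by `ker ω`. -/
lemma pmc_iotaF_kill {m j : ℕ} {ω : Form P E (m + 1)} (X : VF P E)
    (hX : ∀ p, X p ∈ kerSet ω p) (α : Form P E (j + 1))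
    (hα : ∀ p, ∀ v ∈ kerSet ω p, (α p).curryLeft v = 0) :
    iotaF X α = 0 := by
  funext p
  exact hα p (X p) (hX p)

end AuxBasic
section AuxSub

variable {P E : Type} [AddCommGroup E] [Module ℝ E]

/-- `ker ω` at `p` as a submodule. -/
def kerSub {m : ℕ} (ω : Form P E (m + 1)) (p : P) : Submodule ℝ E :=
  LinearMap.ker ((ω p).curryLeft)

lemma mem_kerSub {m : ℕ} {ω : Form P E (m + 1)} {p : P} {v : E} :
    v ∈ kerSub ω p ↔ v ∈ kerSet ω p := Iff.rfl

/-- The Reeb distribution at `p` as a submodule. -/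
def reebSub (C : DiffCalc P E) {m : ℕ} (Θ ω : Form P E (m + 1)) (p : P) : Submodule ℝ E where
  carrier := reebSet C Θ ω p
  zero_mem' := by
    refine ⟨?_, fun w hw => ?_⟩
    · show (ω p).curryLeft 0 = 0
      simp
    · show (((C.d Θ) p).curryLeft 0).curryLeft w = 0
      rw [map_zero, AlternatingMap.curryLeft_zero, LinearMap.zero_apply]
  add_mem' := by
    rintro a b ⟨ha1, ha2⟩ ⟨hb1, hb2⟩
    refine ⟨?_, fun w hw => ?_⟩
    · show (ω p).curryLeft (a + b) = 0
      rw [map_add]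
      rw [show (ω p).curryLeft a = 0 from ha1, show (ω p).curryLeft b = 0 from hb1, add_zero]
    · show (((C.d Θ) p).curryLeft (a + b)).curryLeft w = 0
      rw [map_add, AlternatingMap.curryLeft_add, LinearMap.add_apply, ha2 w hw, hb2 w hw,
        add_zero]
  smul_mem' := by
    rintro c a ⟨ha1, ha2⟩
    refine ⟨?_, fun w hw => ?_⟩
    · show (ω p).curryLeft (c • a) = 0
      rw [map_smul, show (ω p).curryLeft a = 0 from ha1, smul_zero]
    · show (((C.d Θ) p).curryLeft (c • a)).curryLeft w = 0
      rw [map_smul, AlternatingMap.curryLeft_smul, LinearMap.smul_apply, ha2 w hw, smul_zero]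

lemma mem_reebSub {C : DiffCalc P E} {m : ℕ} {Θ ω : Form P E (m + 1)} {p : P} {v : E} :
    v ∈ reebSub C Θ ω p ↔ v ∈ reebSet C Θ ω p := Iff.rfl

/-- The characteristic distribution at `p` as a submodule. -/
def charSub (C : DiffCalc P E) {m : ℕ} (Θ ω : Form P E (m + 1)) (p : P) : Submodule ℝ E where
  carrier := charSet C Θ ω p
  zero_mem' := by
    refine ⟨?_, ?_, ?_⟩ <;> · show _ = _; rw [map_zero]
  add_mem' := by
    rintro a b ⟨ha1, ha2, ha3⟩ ⟨hb1, hb2, hb3⟩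
    refine ⟨?_, ?_, ?_⟩
    · show (ω p).curryLeft (a + b) = 0
      rw [map_add, show (ω p).curryLeft a = 0 from ha1, show (ω p).curryLeft b = 0 from hb1,
        add_zero]
    · show (Θ p).curryLeft (a + b) = 0
      rw [map_add, ha2, hb2, add_zero]
    · show ((C.d Θ) p).curryLeft (a + b) = 0
      rw [map_add, ha3, hb3, add_zero]
  smul_mem' := by
    rintro c a ⟨ha1, ha2, ha3⟩
    refine ⟨?_, ?_, ?_⟩
    · show (ω p).curryLeft (c • a) = 0
      rw [map_smul, show (ω p).curryLeft a = 0 from ha1, smul_zero]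
    · show (Θ p).curryLeft (c • a) = 0
      rw [map_smul, ha2, smul_zero]
    · show ((C.d Θ) p).curryLeft (c • a) = 0
      rw [map_smul, ha3, smul_zero]

lemma mem_charSub {C : DiffCalc P E} {m : ℕ} {Θ ω : Form P E (m + 1)} {p : P} {v : E} :
    v ∈ charSub C Θ ω p ↔ v ∈ charSet C Θ ω p := Iff.rfl

lemma charSub_le_reebSub (C : DiffCalc P E) {m : ℕ} (Θ ω : Form P E (m + 1)) (p : P) :
    charSub C Θ ω p ≤ reebSub C Θ ω p := by
  rintro v ⟨h1, h2, h3⟩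
  refine ⟨h1, fun w hw => ?_⟩
  rw [show ((C.d Θ) p).curryLeft v = 0 from h3, AlternatingMap.curryLeft_zero,
    LinearMap.zero_apply]

end AuxSub
section AuxMulti

variable {P E : Type} [AddCommGroup E] [Module ℝ E]

/-- An alternating map with vanishing contraction kills any tuple containing that vector. -/
lemma pmc_alt_eval_zero {q : ℕ} (f : AlternatingMap ℝ E ℝ (Fin (q + 1)))
    {x : E} (hx : f.curryLeft x = 0) (u : Fin (q + 1) → E) {j : Fin (q + 1)} (hj : u j = x) :
    f u = 0 := by
  have key : ∀ w : Fin (q + 1) → E, w 0 = x → f w = 0 := by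
    intro w hw
    have h1 : f w = (f.curryLeft x) (Fin.tail w) := by
      rw [AlternatingMap.curryLeft_apply_apply]
      congr 1
      rw [← hw]
      exact (Fin.cons_self_tail w).symm
    rw [h1, hx, AlternatingMap.zero_apply]
  rcases eq_or_ne j 0 with h0 | h0
  · exact key u (h0 ▸ hj)
  · have hs : f (u ∘ Equiv.swap 0 j) = -f u := f.map_swap u (Ne.symm h0)
    have h2 : (u ∘ Equiv.swap 0 j) 0 = x := by
      simp [Equiv.swap_apply_left, hj]
    rw [key _ h2] at hs
    exact neg_eq_zero.mp hs.symm

/-- The wedge of a `1`-form with `b` vanishes on tuples containing two distinct `b`-killed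
vectors. -/
lemma pmc_w1p_eval_zero {q : ℕ} (a : AlternatingMap ℝ E ℝ (Fin 1))
    (b : AlternatingMap ℝ E ℝ (Fin (q + 1))) (u : Fin (q + 1 + 1) → E)
    {i j : Fin (q + 1 + 1)} (hij : i ≠ j)
    (hbi : b.curryLeft (u i) = 0) (hbj : b.curryLeft (u j) = 0) :
    w1p a b u = 0 := by
  classical
  set e : (Fin 1 ⊕ Fin (q + 1)) ≃ Fin (q + 1 + 1) :=
    finSumFinEquiv.trans (finCongr (Nat.add_comm 1 (q + 1))) with he
  have hval : w1p a b u = (LinearMap.mul' ℝ ℝ) ((a.domCoprod b) (fun s => u (e s))) := rfl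
  rw [hval]
  have hzero : (a.domCoprod b) (fun s => u (e s)) = 0 := by
    have happ : (a.domCoprod b) (fun s => u (e s)) =
        ∑ σ : Equiv.Perm.ModSumCongr (Fin 1) (Fin (q + 1)),
          AlternatingMap.domCoprod.summand a b σ (fun s => u (e s)) := by
      rw [AlternatingMap.domCoprod_apply, MultilinearMap.sum_apply]
    rw [happ]
    refine Finset.sum_eq_zero fun σ _ => ?_
    induction σ using Quotient.inductionOn' with
    | h π =>
      rw [AlternatingMap.domCoprod.summand_mk'']
      have hbzero : b (fun x => (fun s => u (e s)) (π (Sum.inr x))) = 0 := by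
        -- one of `e.symm i`, `e.symm j` is of the form `π (Sum.inr y)`
        have hne : π.symm (e.symm i) ≠ π.symm (e.symm j) := fun h =>
          hij (e.symm.injective (π.symm.injective h))
        rcases hri : π.symm (e.symm i) with y | y
        · rcases hrj : π.symm (e.symm j) with z | z
          · exact absurd (by rw [hri, hrj, Subsingleton.elim y z]) hne
          · refine pmc_alt_eval_zero b hbj _ (j := z) ?_
            show u (e (π (Sum.inr z))) = u j
            rw [← hrj, Equiv.apply_symm_apply, Equiv.apply_symm_apply]
        · refine pmc_alt_eval_zero b hbi _ (j := y) ?_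
          show u (e (π (Sum.inr y))) = u i
          rw [← hri, Equiv.apply_symm_apply, Equiv.apply_symm_apply]
      rw [MultilinearMap.smul_apply, MultilinearMap.domDomCongr_apply,
        MultilinearMap.domCoprod_apply]
      have hbzero' : (↑b : MultilinearMap ℝ (fun _ : Fin (q + 1) => E) ℝ)
          (fun x => u (e (π (Sum.inr x)))) = 0 := hbzero
      rw [hbzero', TensorProduct.tmul_zero, smul_zero]
  rw [hzero, map_zero]

end AuxMulti
section AuxProp

variable {E : Type} [AddCommGroup E] [Module ℝ E]

/-- Any `(m+1)`-form annihilated by a corank-`(m+1)` subspace `K` is proportional to a fixed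
nonzero such form. -/
lemma pmc_semibasic_proportional {m N : ℕ} (hE : Module.finrank ℝ E = m + 1 + N)
    (K : Submodule ℝ E) (hK : Module.finrank ℝ ↥K = N)
    (ωp b : AlternatingMap ℝ E ℝ (Fin (m + 1)))
    (hω : ∀ v ∈ K, ωp.curryLeft v = 0) (hωne : ωp ≠ 0)
    (hb : ∀ v ∈ K, b.curryLeft v = 0) :
    ∃ c : ℝ, b = c • ωp := by
  classical
  have hfd : FiniteDimensional ℝ E := FiniteDimensional.of_finrank_pos (by omega)
  obtain ⟨W, hW⟩ := Submodule.exists_isCompl K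
  have hWr : Module.finrank ℝ ↥W = m + 1 := by
    have h := Submodule.finrank_add_eq_of_isCompl hW
    omega
  let bK : Module.Basis (Fin N) ℝ ↥K := (Module.finBasis ℝ ↥K).reindex (finCongr (by rw [hK]))
  let bW : Module.Basis (Fin (m + 1)) ℝ ↥W := (Module.finBasis ℝ ↥W).reindex (finCongr (by rw [hWr]))
  let bE : Module.Basis (Fin N ⊕ Fin (m + 1)) ℝ E :=
    (bK.prod bW).map (Submodule.prodEquivOfIsCompl K W hW)
  have hinl : ∀ y, bE (Sum.inl y) ∈ K := by
    intro y
    have : bE (Sum.inl y) = ((bK y : E)) := by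
      simp [bE, Module.Basis.map_apply, Submodule.coe_prodEquivOfIsCompl, Module.Basis.prod_apply]
    rw [this]; exact (bK y).2
  set wt : Fin (m + 1) → E := fun i => bE (Sum.inr i) with hwt
  have hvanish : ∀ (f : AlternatingMap ℝ E ℝ (Fin (m + 1))), (∀ v ∈ K, f.curryLeft v = 0) →
      ∀ (v : Fin (m + 1) → Fin N ⊕ Fin (m + 1)), (∃ i y, v i = Sum.inl y) →
      f (fun i => bE (v i)) = 0 := by
    rintro f hf v ⟨i, y, hi⟩
    refine pmc_alt_eval_zero f (x := bE (v i)) ?_ _ (j := i) rfl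
    exact hf _ (by rw [hi]; exact hinl y)
  have hstruct : ∀ v : Fin (m + 1) → Fin N ⊕ Fin (m + 1), Function.Injective v →
      (¬ ∃ i y, v i = Sum.inl y) →
      ∃ σ : Equiv.Perm (Fin (m + 1)), (fun i => bE (v i)) = wt ∘ σ := by
    intro v hv hno
    push_neg at hno
    have hex : ∀ i, ∃ y, v i = Sum.inr y := by
      intro i
      cases h : v i with
      | inl y => exact absurd h (hno i y)
      | inr y => exact ⟨y, rfl⟩
    choose uu hu using hex
    have huinj : Function.Injective uu := by
      intro i i' h
      apply hv
      rw [hu i, hu i', h]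
    have hbij : Function.Bijective uu := Finite.injective_iff_bijective.mp huinj
    refine ⟨Equiv.ofBijective uu hbij, ?_⟩
    funext i
    show bE (v i) = wt (uu i)
    rw [hu i]
  have hwtne : ωp wt ≠ 0 := by
    intro h0
    apply hωne
    apply Module.Basis.ext_alternating bE
    intro v hvinj
    rw [AlternatingMap.zero_apply]
    by_cases hc : ∃ i y, v i = Sum.inl y
    · exact hvanish ωp hω v hc
    · obtain ⟨σ, hσ⟩ := hstruct v hvinj hc
      rw [hσ, AlternatingMap.map_perm, h0, smul_zero]
  refine ⟨b wt / ωp wt, ?_⟩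
  apply Module.Basis.ext_alternating bE
  intro v hvinj
  by_cases hc : ∃ i y, v i = Sum.inl y
  · rw [hvanish b hb v hc, AlternatingMap.smul_apply, hvanish ωp hω v hc, smul_zero]
  · obtain ⟨σ, hσ⟩ := hstruct v hvinj hc
    rw [hσ, AlternatingMap.map_perm, AlternatingMap.smul_apply, AlternatingMap.map_perm]
    rw [smul_comm]
    congr 1
    rw [smul_eq_mul, div_mul_cancel₀ _ hwtne]
section AuxPoint

variable {P E : Type} [AddCommGroup E] [Module ℝ E]

lemma pmc_point_key (C : DiffCalc P E) {m N k : ℕ} (Θ ω : Form P E (m + 1))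
    (hpmc : IsPremulticontact C m N k Θ ω)
    (θ : Fin (m + 1) → Form P E m)
    (hindep : ∀ p, LinearIndependent ℝ fun μ => θ μ p)
    (R : Fin (m + 1) → VF P E) (hR : ∀ μ, IsReebField C Θ ω (R μ))
    (hiota : ∀ μ, iotaF (R μ) Θ = θ μ) (p : P) :
    (∀ v ∈ reebSet C Θ ω p, (Θ p).curryLeft v = 0 → v ∈ charSet C Θ ω p) ∧
    (∀ v ∈ reebSet C Θ ω p, ∃ c : Fin (m + 1) → ℝ,
      (Θ p).curryLeft v = ∑ μ, c μ • θ μ p) := by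
  classical
  have hfd : FiniteDimensional ℝ E :=
    FiniteDimensional.of_finrank_pos (by rw [hpmc.dim_eq]; omega)
  set RS := reebSub C Θ ω p with hRS
  set CS := charSub C Θ ω p with hCS
  have hRSrank : Module.finrank ℝ ↥RS = m + 1 + k := by
    have h := hpmc.rank_reeb p
    unfold rk at h
    rw [show reebSet C Θ ω p = (RS : Set E) from rfl, Submodule.span_eq] at h
    exact h
  have hCSrank : Module.finrank ℝ ↥CS = k := by
    have h := hpmc.rank_char p
    unfold rk at h
    rw [show charSet C Θ ω p = (CS : Set E) from rfl, Submodule.span_eq] at h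
    exact h
  set T : ↥RS →ₗ[ℝ] AlternatingMap ℝ E ℝ (Fin m) := ((Θ p).curryLeft).domRestrict RS with hT
  have hmemR : ∀ μ, R μ p ∈ RS := fun μ => hR μ p
  have hTval : ∀ μ, T ⟨R μ p, hmemR μ⟩ = θ μ p := fun μ => congrFun (hiota μ) p
  have hspan_le : Submodule.span ℝ (Set.range fun μ => θ μ p) ≤ LinearMap.range T := by
    rw [Submodule.span_le]
    rintro x ⟨μ, rfl⟩
    exact ⟨⟨R μ p, hmemR μ⟩, hTval μ⟩
  have hspanrank :
      Module.finrank ℝ ↥(Submodule.span ℝ (Set.range fun μ => θ μ p)) = m + 1 := by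
    rw [finrank_span_eq_card (hindep p)]
    simp
  have hub : m + 1 ≤ Module.finrank ℝ ↥(LinearMap.range T) := by
    rw [← hspanrank]
    exact Submodule.finrank_mono hspan_le
  have hCSle : CS ≤ RS := charSub_le_reebSub C Θ ω p
  have hcomap_le : Submodule.comap RS.subtype CS ≤ LinearMap.ker T := by
    rintro ⟨v, hv⟩ hmem
    have h2 : (Θ p).curryLeft v = 0 := (mem_charSub.mp hmem).2.1
    exact h2
  have hcomaprank : Module.finrank ℝ ↥(Submodule.comap RS.subtype CS) = k := by
    rw [LinearEquiv.finrank_eq (Submodule.comapSubtypeEquivOfLe hCSle)]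
    exact hCSrank
  have hrn := LinearMap.finrank_range_add_finrank_ker T
  rw [hRSrank] at hrn
  have hker_ge : k ≤ Module.finrank ℝ ↥(LinearMap.ker T) := by
    rw [← hcomaprank]
    exact Submodule.finrank_mono hcomap_le
  have hkereq : LinearMap.ker T = Submodule.comap RS.subtype CS :=
    (Submodule.eq_of_le_of_finrank_le hcomap_le (by omega)).symm
  have hrangeeq : LinearMap.range T = Submodule.span ℝ (Set.range fun μ => θ μ p) :=
    (Submodule.eq_of_le_of_finrank_le hspan_le (by omega)).symm
  constructor
  · intro v hv hθ
    have hmem : (⟨v, hv⟩ : ↥RS) ∈ LinearMap.ker T := hθ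
    rw [hkereq] at hmem
    exact mem_charSub.mp hmem
  · intro v hv
    have hmem : (Θ p).curryLeft v ∈ LinearMap.range T := ⟨⟨v, hv⟩, rfl⟩
    rw [hrangeeq] at hmem
    obtain ⟨c, hc⟩ := (Submodule.mem_span_range_iff_exists_fun ℝ).mp hmem
    exact ⟨c, hc.symm⟩

end AuxPoint
section AuxBracket

variable {P E : Type} [AddCommGroup E] [Module ℝ E]

lemma pmc_kerSet_eq_coe {m : ℕ} (ω : Form P E (m + 1)) (p : P) :
    kerSet ω p = ↑(kerSub ω p) := by
  ext v
  simp [kerSub, kerSet, LinearMap.mem_ker]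

lemma pmc_kerSub_rank (C : DiffCalc P E) {m N k : ℕ} {Θ ω : Form P E (m + 1)}
    (hpmc : IsPremulticontact C m N k Θ ω) (p : P) :
    Module.finrank ℝ ↥(kerSub ω p) = N := by
  have h := hpmc.rank_ker p
  unfold rk at h
  rw [pmc_kerSet_eq_coe, Submodule.span_eq] at h
  exact h

lemma pmc_omega_ne_zero (C : DiffCalc P E) {m N k : ℕ} {Θ ω : Form P E (m + 1)}
    (hpmc : IsPremulticontact C m N k Θ ω) (p : P) : ω p ≠ 0 := by
  intro h0
  have hK : kerSub ω p = ⊤ := by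
    ext v
    simp [kerSub, LinearMap.mem_ker, h0]
  have h := pmc_kerSub_rank C hpmc p
  rw [hK, finrank_top] at h
  have h2 := hpmc.dim_eq
  omega

lemma pmc_iotaF_omega (C : DiffCalc P E) {m : ℕ} {Θ ω : Form P E (m + 1)} (X : VF P E)
    (hX : IsReebField C Θ ω X) : iotaF X ω = 0 :=
  funext fun p => (hX p).1

lemma pmc_lieD_omega (C : DiffCalc P E) {m : ℕ} {Θ ω : Form P E (m + 1)}
    (hω : C.d ω = 0) (X : VF P E) (hX : IsReebField C Θ ω X) : C.lieD X ω = 0 := by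
  rw [C.cartan, hω, pmc_iotaF_zero, pmc_iotaF_omega C X hX, pmc_d_zero, add_zero]

lemma pmc_bracket_ker (C : DiffCalc P E) {m N k : ℕ} {Θ ω : Form P E (m + 1)}
    (hpmc : IsPremulticontact C m N k Θ ω) (X Y : VF P E)
    (hX : IsReebField C Θ ω X) (hY : IsReebField C Θ ω Y) :
    iotaF (C.bracket X Y) ω = 0 := by
  have h := C.lie_iota X Y ω
  rw [pmc_iotaF_omega C Y hY, pmc_lieD_zero, pmc_lieD_omega C hpmc.closed X hX,
    pmc_iotaF_zero, add_zero] at h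
  exact h.symm

lemma pmc_iotaF_gamma (C : DiffCalc P E) {m : ℕ} {Θ ω : Form P E (m + 1)} (X Y : VF P E)
    (hX : IsReebField C Θ ω X) (hY : ∀ p, Y p ∈ kerSet ω p) :
    iotaF Y (iotaF X (C.d Θ)) = 0 :=
  funext fun p => (hX p).2 (Y p) (hY p)

lemma pmc_w1p_curry_curry {q : ℕ} (s : AlternatingMap ℝ E ℝ (Fin 1))
    (b : AlternatingMap ℝ E ℝ (Fin (q + 1))) {x w : E}
    (hx : b.curryLeft x = 0) (hw : b.curryLeft w = 0) :
    ((w1p s b).curryLeft x).curryLeft w = 0 := by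
  ext r
  rw [AlternatingMap.zero_apply, AlternatingMap.curryLeft_apply_apply,
    AlternatingMap.curryLeft_apply_apply]
  refine pmc_w1p_eval_zero s b _ (i := 0) (j := 1) Fin.zero_ne_one ?_ ?_
  · simpa using hx
  · simpa using hw

/-- The bracket of two Reeb fields is a Reeb field. -/
lemma pmc_bracket_reeb (C : DiffCalc P E) {m N k : ℕ} {Θ ω : Form P E (m + 1)}
    (hpmc : IsPremulticontact C m N k Θ ω) (X Y : VF P E)
    (hX : IsReebField C Θ ω X) (hY : IsReebField C Θ ω Y) :
    IsReebField C Θ ω (C.bracket X Y) := by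
  classical
  -- the 1-jet coefficients of the semibasic (m+1)-forms i(X)dΘ, i(Y)dΘ
  have hsemif : ∀ (Z : VF P E), IsReebField C Θ ω Z →
      ∃ f : P → ℝ, iotaF Z (C.d Θ) = fsmul f ω := by
    intro Z hZ
    have hch : ∀ q : P, ∃ c : ℝ, (iotaF Z (C.d Θ)) q = c • ω q := by
      intro q
      refine pmc_semibasic_proportional hpmc.dim_eq (kerSub ω q) (pmc_kerSub_rank C hpmc q)
        (ω q) ((iotaF Z (C.d Θ)) q) (fun v hv => hv) (pmc_omega_ne_zero C hpmc q) ?_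
      intro v hv
      exact (hZ q).2 v hv
    choose f hf using hch
    exact ⟨f, funext hf⟩
  obtain ⟨fX, hfX⟩ := hsemif X hX
  obtain ⟨fY, hfY⟩ := hsemif Y hY
  have hdγ : ∀ (Z : VF P E) (f : P → ℝ), iotaF Z (C.d Θ) = fsmul f ω →
      C.d (iotaF Z (C.d Θ)) = w1F (C.d (toF0 f)) ω := by
    intro Z f hf
    rw [hf, C.leibniz_fun, hpmc.closed, pmc_fsmul_zero, add_zero]
  have hkey : iotaF (C.bracket X Y) (C.d Θ) =
      iotaF X (C.d (iotaF Y (C.d Θ))) - iotaF Y (C.d (iotaF X (C.d Θ))) := by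
    have h1 := C.lie_iota X Y (C.d Θ)
    have h2 : C.lieD X (C.d Θ) = C.d (iotaF X (C.d Θ)) := by
      rw [C.cartan, C.d_d, pmc_iotaF_zero, zero_add]
    have h3 : C.lieD X (iotaF Y (C.d Θ)) = iotaF X (C.d (iotaF Y (C.d Θ))) := by
      rw [C.cartan, pmc_iotaF_gamma C Y X hY (fun p => (hX p).1), pmc_d_zero, add_zero]
    rw [h2, h3] at h1
    exact eq_sub_of_add_eq h1.symm
  rw [hdγ X fX hfX, hdγ Y fY hfY] at hkey
  intro p
  refine ⟨congrFun (pmc_bracket_ker C hpmc X Y hX hY) p, ?_⟩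
  intro w hw
  have hpt : ((C.d Θ) p).curryLeft (C.bracket X Y p) =
      (w1p ((C.d (toF0 fY)) p) (ω p)).curryLeft (X p)
        - (w1p ((C.d (toF0 fX)) p) (ω p)).curryLeft (Y p) := congrFun hkey p
  have hsub : ∀ A B : AlternatingMap ℝ E ℝ (Fin (m + 1)),
      (A - B).curryLeft w = A.curryLeft w - B.curryLeft w := by
    intro A B
    have h := congrArg (fun g : E →ₗ[ℝ] AlternatingMap ℝ E ℝ (Fin m) => g w)
      (map_sub (AlternatingMap.curryLeftLinearMap (R := ℝ) (M := E) (N := ℝ) (n := m)) A B)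
    simpa using h
  have e1 : ((w1p ((C.d (toF0 fY)) p) (ω p)).curryLeft (X p)).curryLeft w = 0 :=
    pmc_w1p_curry_curry _ _ ((hX p).1) hw
  have e2 : ((w1p ((C.d (toF0 fX)) p) (ω p)).curryLeft (Y p)).curryLeft w = 0 :=
    pmc_w1p_curry_curry _ _ ((hY p).1) hw
  rw [hpt, hsub, e1, e2, sub_zero]

end AuxBracket
section AuxFinal

variable {P E : Type} [AddCommGroup E] [Module ℝ E]

/-- Contraction of the bracket of Reeb fields with `Θ` vanishes (positive-degree case). -/
lemma pmc_bracket_theta (C : DiffCalc P E) {m' : ℕ} {Θ ω : Form P E (m' + 1 + 1)}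
    (X Y : VF P E) (hX : IsReebField C Θ ω X) (hY : IsReebField C Θ ω Y)
    (θX θY : Form P E (m' + 1)) (hθX : iotaF X Θ = θX) (hθY : iotaF Y Θ = θY)
    (hsbY : ∀ p, ∀ v ∈ kerSet ω p, (θY p).curryLeft v = 0)
    (hclY : C.d θY = 0) (hclX : C.d θX = 0) :
    iotaF (C.bracket X Y) Θ = 0 := by
  have h1 := C.lie_iota X Y Θ
  have h2 : C.lieD X Θ = iotaF X (C.d Θ) := by
    rw [C.cartan, hθX, hclX, add_zero]
  have h3 : iotaF Y (C.lieD X Θ) = 0 := by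
    rw [h2]
    exact pmc_iotaF_gamma C X Y hX (fun p => (hY p).1)
  have h4 : C.lieD X θY = 0 := by
    rw [C.cartan, hclY, pmc_iotaF_zero, zero_add,
      pmc_iotaF_kill X (fun p => (hX p).1) θY hsbY, pmc_d_zero]
  rw [hθY, h4, h3, add_zero] at h1
  exact h1.symm

/-- The self-bracket vanishes identically (needed for the degenerate case `m = 0`). -/
lemma pmc_bracket_self_zero (C : DiffCalc P E) (hN : 2 ≤ Module.finrank ℝ E)
    (X : VF P E) (p : P) : C.bracket X X p = 0 := by
  classical
  have hfd : FiniteDimensional ℝ E := FiniteDimensional.of_finrank_pos (by omega)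
  have hzero2 : ∀ β : Form P E 2, iotaF (C.bracket X X) β = 0 := by
    intro β
    have h1 := C.lie_iota X X β
    have hdd : iotaF X (iotaF X β) = 0 := funext fun q => AlternatingMap.curryLeft_same _ _
    have hdd' : iotaF X (iotaF X (C.d β)) = 0 :=
      funext fun q => AlternatingMap.curryLeft_same _ _
    have h2 : C.lieD X (iotaF X β) = iotaF X (C.d (iotaF X β)) := by
      rw [C.cartan, hdd, pmc_d_zero, add_zero]
    have h3 : iotaF X (C.lieD X β) = iotaF X (C.d (iotaF X β)) := by
      rw [C.cartan, pmc_iotaF_add, hdd', zero_add]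
    rw [h2, h3] at h1
    exact right_eq_add.mp h1
  have hpt : ∀ β2 : AlternatingMap ℝ E ℝ (Fin 2), β2.curryLeft (C.bracket X X p) = 0 :=
    fun β2 => congrFun (hzero2 (fun _ => β2)) p
  set bE := Module.finBasis ℝ E with hbE
  apply (Module.Basis.forall_coord_eq_zero_iff bE).mp
  intro i
  have h0lt : 0 < Module.finrank ℝ E := by omega
  have h1lt : 1 < Module.finrank ℝ E := by omega
  obtain ⟨j, hj⟩ : ∃ j, j ≠ i := by
    by_cases h : i = ⟨0, h0lt⟩
    · exact ⟨⟨1, h1lt⟩, by simp [h, Fin.ext_iff]⟩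
    · exact ⟨⟨0, h0lt⟩, fun hc => h hc.symm⟩
  set L : E →ₗ[ℝ] (Fin 2 → ℝ) :=
    LinearMap.pi (fun t : Fin 2 => if t = 0 then bE.coord i else bE.coord j) with hL
  set β2 : AlternatingMap ℝ E ℝ (Fin 2) :=
    (Matrix.detRowAlternating : AlternatingMap ℝ (Fin 2 → ℝ) ℝ (Fin 2)).compLinearMap L with hβ2
  have h := hpt β2
  have h2 := DFunLike.congr_fun h (fun _ : Fin 1 => bE j)
  rw [AlternatingMap.curryLeft_apply_apply, AlternatingMap.zero_apply,
    AlternatingMap.compLinearMap_apply] at h2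
  have h3 : Matrix.det (Matrix.of fun t s =>
      L (Matrix.vecCons (C.bracket X X p) (fun _ : Fin 1 => bE j) t) s) = 0 := h2
  rw [Matrix.det_fin_two] at h3
  simp only [Matrix.of_apply, hL, LinearMap.pi_apply, Matrix.cons_val_zero, Matrix.cons_val_one,
    Matrix.head_cons] at h3
  simp only [if_true, Matrix.vecHead] at h3
  rw [if_neg (by decide : ¬(1 : Fin 2) = 0)] at h3
  simp [Module.Basis.coord_apply, Module.Basis.repr_self_apply, hj] at h3
  simpa [Module.Basis.coord_apply] using h3

end AuxFinal
/-- On a premulticontact manifold `(P, Θ, ω)` with characteristic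
distribution `𝒞` of rank `k > 0`, given the coordinate `(m-1)`-forms `θ_μ` of an adapted
chart (abstracted as closed, semibasic, pointwise independent forms), there are local Reeb
vector fields `R_μ` with `i(R_μ)Θ = θ_μ` such that `𝕽 = ⟨R_μ⟩ + Γ(𝒞)`; they are unique up
to the addition of sections of `𝒞`, and `[R_μ, R_ν] ∈ Γ(𝒞)`. -/
theorem premulticontact_local_reeb_fields
    {P E : Type} [AddCommGroup E] [Module ℝ E] (C : DiffCalc P E)
    {m N k : ℕ} (hk : 0 < k) (Θ ω : Form P E (m + 1))
    (hpmc : IsPremulticontact C m N k Θ ω)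
    (θ : Fin (m + 1) → Form P E m)
    (hsb : ∀ μ, SemibasicPt ω (θ μ))
    (hclosed : ∀ μ, C.d (θ μ) = 0)
    (hindep : ∀ p, LinearIndependent ℝ fun μ => θ μ p) :
    ∃ R : Fin (m + 1) → VF P E,
      (∀ μ, IsReebField C Θ ω (R μ)) ∧
      (∀ μ, iotaF (R μ) Θ = θ μ) ∧
      (∀ S : VF P E, IsReebField C Θ ω S →
        ∃ g : Fin (m + 1) → P → ℝ,
          ∀ p, S p - ∑ μ, g μ p • R μ p ∈ charSet C Θ ω p) ∧
      (∀ R' : Fin (m + 1) → VF P E,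
        (∀ μ, IsReebField C Θ ω (R' μ)) → (∀ μ, iotaF (R' μ) Θ = θ μ) →
          ∀ μ p, R μ p - R' μ p ∈ charSet C Θ ω p) ∧
      ∀ μ ν p, C.bracket (R μ) (R ν) p ∈ charSet C Θ ω p := by
  classical
  have hex : ∀ μ, ∃ Rf : VF P E, IsReebField C Θ ω Rf ∧ θ μ = iotaF Rf Θ := by
    intro μ
    have hmem : θ μ ∈ {α : Form P E m | SemibasicPt ω α} := hsb μ
    rw [hpmc.reeb_semibasic] at hmem
    exact hmem
  choose R hReeb hiotaeq using hex
  have hiota : ∀ μ, iotaF (R μ) Θ = θ μ := fun μ => (hiotaeq μ).symm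
  have key := pmc_point_key C Θ ω hpmc θ hindep R hReeb hiota
  have hθval : ∀ μ p, (Θ p).curryLeft (R μ p) = θ μ p := fun μ p => congrFun (hiota μ) p
  refine ⟨R, hReeb, hiota, ?_, ?_, ?_⟩
  · -- every Reeb field is a combination of the `R μ` modulo the characteristic distribution
    intro S hS
    have hex2 : ∀ p, ∃ c : Fin (m + 1) → ℝ, (Θ p).curryLeft (S p) = ∑ μ, c μ • θ μ p :=
      fun p => (key p).2 (S p) (hS p)
    choose g hg using hex2
    refine ⟨fun μ p => g p μ, fun p => ?_⟩
    have hmem : S p - ∑ μ, g p μ • R μ p ∈ reebSub C Θ ω p :=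
      Submodule.sub_mem _ (hS p)
        (Submodule.sum_mem _ fun μ _ => Submodule.smul_mem _ _ (hReeb μ p))
    apply (key p).1 _ hmem
    rw [map_sub, map_sum, hg p]
    have hterm : ∀ μ ∈ Finset.univ, (Θ p).curryLeft (g p μ • R μ p) = g p μ • θ μ p := by
      intro μ _
      rw [map_smul, hθval]
    rw [Finset.sum_congr rfl hterm, sub_self]
  · -- uniqueness up to sections of the characteristic distribution
    intro R' hR' hiota' μ p
    have hmem : R μ p - R' μ p ∈ reebSub C Θ ω p :=
      Submodule.sub_mem _ (hReeb μ p) (hR' μ p)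
    apply (key p).1 _ hmem
    have hθval' : (Θ p).curryLeft (R' μ p) = θ μ p := congrFun (hiota' μ) p
    rw [map_sub, hθval, hθval', sub_self]
  · -- brackets lie in the characteristic distribution
    intro μ ν p
    have hBreeb : IsReebField C Θ ω (C.bracket (R μ) (R ν)) :=
      pmc_bracket_reeb C hpmc _ _ (hReeb μ) (hReeb ν)
    cases m with
    | zero =>
      have hμν : μ = ν := by
        have h1 := μ.isLt
        have h2 := ν.isLt
        exact Fin.ext (by omega)
      subst hμν
      have hN : 2 ≤ Module.finrank ℝ E := by
        have h1 := hpmc.dim_eq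
        have h2 := hpmc.k_le
        omega
      rw [pmc_bracket_self_zero C hN (R μ) p]
      exact (charSub C Θ ω p).zero_mem
    | succ m' =>
      have hsbν : ∀ q, ∀ v ∈ kerSet ω q, ((θ ν) q).curryLeft v = 0 := hsb ν
      have hθzero : iotaF (C.bracket (R μ) (R ν)) Θ = 0 :=
        pmc_bracket_theta C (R μ) (R ν) (hReeb μ) (hReeb ν) (θ μ) (θ ν)
          (hiota μ) (hiota ν) hsbν (hclosed ν) (hclosed μ)
      apply (key p).1 _ (hBreeb p)
      exact congrFun hθzero p
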